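/- With the notation of the previous statement (O a DVR, Λ a lattice sequence of period e, a_{-m}(Λ) the associated filtration of End(V)): if i ∈ ℤ is such that Λ_i ≠ Λ_{i+1}, then a_{-m}(Λ)·Λ_i = Λ_{i-m}, i.e., the O-module generated by { a·v : a ∈ a_{-m}(Λ), v ∈ Λ_i } equals Λ_{i-m}. -/

import Mathlib

open Pointwise

set_option maxHeartbeats 1000000 in
/-- If `Λ_i` is a jump of the lattice sequence `Λ`, then
`a_{-m}(Λ) · Λ_i = Λ_{i-m}`. -/
theorem stmt_18 {O : Type*} [CommRing O] [IsDomain O] [IsDiscreteValuationRing O]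
    {V : Type*} [AddCommGroup V] [Module O V]
    [Module (FractionRing O) V] [IsScalarTower O (FractionRing O) V]
    (π : O) (hπ : Irreducible π)
    (e : ℕ) (he : 0 < e)
    (Λ : ℤ → Submodule O V)
    (hdec : ∀ j : ℤ, Λ (j + 1) ≤ Λ j)
    (hper : ∀ j : ℤ, Λ (j + e) = π • Λ j)
    (hlat : ∀ j : ℤ, (Λ j).FG ∧ Submodule.span (FractionRing O) (Λ j : Set V) = ⊤)
    (m i : ℤ) (hjump : Λ i ≠ Λ (i + 1)) :
    Submodule.span O {y : V | ∃ f : V →ₗ[FractionRing O] V,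
        (∀ j : ℤ, ∀ x ∈ Λ j, f x ∈ Λ (j - m)) ∧ ∃ x ∈ Λ i, y = f x} = Λ (i - m) := by
  classical
  have hπ0 : π ≠ 0 := hπ.ne_zero
  have hinj : Function.Injective (algebraMap O (FractionRing O)) :=
    IsFractionRing.injective O (FractionRing O)
  set c : FractionRing O := algebraMap O (FractionRing O) π with hc_def
  have hc0 : c ≠ 0 := by
    simpa [hc_def] using (map_ne_zero_iff _ hinj).mpr hπ0
  -- monotonicity of Λ
  have hmono : ∀ a b : ℤ, a ≤ b → Λ b ≤ Λ a := by
    intro a b hab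
    obtain ⟨n, rfl⟩ := Int.le.dest hab
    induction n with
    | zero => simp
    | succ n ih =>
        have : Λ (a + (n + 1 : ℕ)) = Λ ((a + n) + 1) := by push_cast; ring_nf
        rw [this]
        exact le_trans (hdec (a + n)) (ih (by omega))
  -- the one-step periodicity, stated elementwise
  have hstep : ∀ (j : ℤ) (v : V), v ∈ Λ j ↔ c • v ∈ Λ (j + e) := by
    intro j v
    rw [hper j]
    constructor
    · intro hv
      have h1 : π • v ∈ π • Λ j := Submodule.smul_mem_pointwise_smul v π (Λ j) hv
      rwa [algebraMap_smul (FractionRing O) π v] at *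
    · intro hv
      have h1 : (c • v) ∈ π • (Λ j : Set V) := by
        have := Submodule.coe_pointwise_smul π (Λ j)
        rw [← this]
        exact hv
      obtain ⟨w, hw, hwv⟩ := Set.mem_smul_set.mp h1
      have h2 : c • w = c • v := by
        rw [← hwv, ← algebraMap_smul (FractionRing O) π w]
      have h3 : w = v := smul_right_injective V hc0 h2
      rwa [← h3]
  -- ℤ-indexed periodicity
  have hZ : ∀ (k j : ℤ) (v : V), v ∈ Λ j ↔ c ^ k • v ∈ Λ (j + k * e) := by
    intro k
    induction k using Int.induction_on with
    | zero => intro j v; simp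
    | succ n ih =>
        intro j v
        rw [ih j v, hstep (j + (n : ℤ) * e) (c ^ (n : ℤ) • v)]
        have h1 : c • c ^ (n : ℤ) • v = c ^ ((n : ℤ) + 1) • v := by
          rw [zpow_add_one₀ hc0, mul_comm, mul_smul]
        rw [h1, show j + (n : ℤ) * e + e = j + ((n : ℤ) + 1) * e by ring]
    | pred n ih =>
        intro j v
        rw [ih j v]
        have h0 := hstep (j + (-(n : ℤ) - 1) * e) (c ^ (-(n : ℤ) - 1) • v)
        have h1 : c • c ^ (-(n : ℤ) - 1) • v = c ^ (-(n : ℤ)) • v := by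
          rw [← mul_smul, mul_comm, ← zpow_add_one₀ hc0]
          norm_num
        rw [h1, show j + (-(n : ℤ) - 1) * e + e = j + (-(n : ℤ)) * e by ring] at h0
        exact h0.symm
  -- torsion-freeness
  haveI : NoZeroSMulDivisors O V := by
    constructor
    intro r v h
    by_cases hr : r = 0
    · exact Or.inl hr
    · right
      have h1 : (algebraMap O (FractionRing O) r) • v = 0 := by
        rwa [algebraMap_smul]
      have h2 : algebraMap O (FractionRing O) r ≠ 0 := (map_ne_zero_iff _ hinj).mpr hr
      exact (smul_eq_zero.mp h1).resolve_left h2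
  haveI : Module.Finite O ↥(Λ i) := Module.Finite.iff_fg.mpr (hlat i).1
  -- Smith normal form for Λ(i+1) inside Λ i
  set N : Submodule O ↥(Λ i) := (Λ (i + 1)).comap (Λ i).subtype with hN_def
  have hNtop : N ≠ ⊤ := by
    intro h
    apply hjump
    apply le_antisymm _ (hdec i)
    intro u hu
    have : (⟨u, hu⟩ : ↥(Λ i)) ∈ N := h ▸ Submodule.mem_top
    exact this
  set b0 : Module.Basis (Module.Free.ChooseBasisIndex O ↥(Λ i)) O ↥(Λ i) :=
    Module.Free.chooseBasis O ↥(Λ i) with hb0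
  obtain ⟨n, snf⟩ := N.smithNormalForm b0
  -- find a coordinate that maps N into (π)
  have hkey : ∃ t, ∀ w : ↥(Λ i), w ∈ N → snf.bM.repr w t ∈ Ideal.span {π} := by
    by_contra hcon
    push_neg at hcon
    apply hNtop
    rw [eq_top_iff, ← snf.bM.span_eq, Submodule.span_le]
    rintro _ ⟨t, rfl⟩
    obtain ⟨w, hwN, hwt⟩ := hcon t
    by_cases hrange : t ∈ Set.range snf.f
    · obtain ⟨s, rfl⟩ := hrange
      have ha : IsUnit (snf.a s) := by
        by_contra hunit
        apply hwt
        have hmem : snf.a s ∈ Ideal.span {π} := by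
          rw [← hπ.maximalIdeal_eq]
          exact hunit
        have hrepr := snf.repr_apply_embedding_eq_repr_smul (m := ⟨w, hwN⟩) (i := s)
        rw [hrepr, map_smul, Finsupp.smul_apply, smul_eq_mul]
        exact Ideal.mul_mem_right _ _ hmem
      have h3 : ((snf.bN s : ↥(Λ i))) = snf.a s • snf.bM (snf.f s) := snf.snf s
      have h4 : snf.bM (snf.f s) = (↑ha.unit⁻¹ : O) • ((snf.bN s : ↥(Λ i))) := by
        rw [h3, smul_smul]
        rw [ha.val_inv_mul, one_smul]
      rw [SetLike.mem_coe, h4]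
      exact N.smul_mem _ (snf.bN s).2
    · exfalso
      exact hwt (by rw [snf.repr_eq_zero_of_notMem_range (m := ⟨w, hwN⟩) hrange]; simp)
  obtain ⟨t, ht⟩ := hkey
  -- extend the coordinate to a K-linear functional on V
  set v : Module.Free.ChooseBasisIndex O ↥(Λ i) → V := fun s => ((snf.bM s : ↥(Λ i)) : V)
    with hv_def
  have liO : LinearIndependent O v := by
    have := snf.bM.linearIndependent.map' (Λ i).subtype (Submodule.ker_subtype _)
    exact this
  have liK : LinearIndependent (FractionRing O) v :=
    liO.localization (FractionRing O) (nonZeroDivisors O)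
  have hsp : ⊤ ≤ Submodule.span (FractionRing O) (Set.range v) := by
    rw [← (hlat i).2, Submodule.span_le]
    intro u hu
    have h1 : (⟨u, hu⟩ : ↥(Λ i)) ∈ Submodule.span O (Set.range snf.bM) := by
      rw [snf.bM.span_eq]; trivial
    have h2 : u ∈ Submodule.map (Λ i).subtype (Submodule.span O (Set.range snf.bM)) :=
      ⟨⟨u, hu⟩, h1, rfl⟩
    rw [Submodule.map_span] at h2
    have h3 : (Λ i).subtype '' Set.range snf.bM = Set.range v := by
      ext z
      simp [hv_def, Set.range_comp]
    rw [h3] at h2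
    exact Submodule.span_subset_span O (FractionRing O) _ h2
  set B : Module.Basis (Module.Free.ChooseBasisIndex O ↥(Λ i)) (FractionRing O) V :=
    Module.Basis.mk liK hsp with hB
  set φ : V →ₗ[FractionRing O] FractionRing O := B.coord t with hφ_def
  have hφB : ∀ s, φ (v s) = if s = t then (1 : FractionRing O) else 0 := by
    intro s
    have h1 : v s = B s := (Module.Basis.mk_apply liK hsp s).symm
    rw [h1, hφ_def, Module.Basis.coord_apply, Module.Basis.repr_self, Finsupp.single_apply]
  -- compatibility of φ with the O-coordinate
  have hφ : ∀ u : ↥(Λ i), φ ↑u = algebraMap O (FractionRing O) (snf.bM.repr u t) := by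
    intro u
    have h1 : (∑ s, snf.bM.repr u s • snf.bM s) = u := snf.bM.sum_repr u
    have h2 : (u : V) = ∑ s, snf.bM.repr u s • v s := by
      conv_lhs => rw [← h1]
      push_cast
      rfl
    rw [h2, map_sum]
    have h4 : ∀ s, φ (snf.bM.repr u s • v s) = snf.bM.repr u s • φ (v s) := fun s =>
      φ.map_smul_of_tower _ _
    simp_rw [h4, hφB]
    simp [smul_ite, Finset.sum_ite_eq', Algebra.algebraMap_eq_smul_one]
  -- the main computation
  have hmain : ∀ y ∈ Λ (i - m), ∀ (j : ℤ), ∀ u ∈ Λ j, φ u • y ∈ Λ (j - m) := by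
    intro y hy j u hu
    set q : ℤ := (i - j) / e with hq
    set k : ℤ := -q with hk
    have hdiv := Int.mul_ediv_add_emod (i - j) (e : ℤ)
    have he' : (0 : ℤ) < e := by exact_mod_cast he
    have hr1 : 0 ≤ (i - j) % e := Int.emod_nonneg _ (by omega)
    have hr2 : (i - j) % e < e := Int.emod_lt_of_pos _ he'
    have hke : k * e = j - i + (i - j) % e := by
      rw [hk]
      linear_combination -hdiv
    have hk1 : j - m ≤ i - m + k * e := by linarith
    have hk2 : i + 1 + (k - 1) * e ≤ j := by
      have h5 : (k - 1) * e = k * e - e := by ring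
      linarith
    have hu1 : u ∈ Λ (i + 1 + (k - 1) * e) := hmono _ _ hk2 hu
    have hw : c ^ (1 - k) • u ∈ Λ (i + 1) := by
      have h6 := (hZ (1 - k) (i + 1 + (k - 1) * e) u).mp hu1
      rwa [show i + 1 + (k - 1) * e + (1 - k) * e = i + 1 by ring] at h6
    have hwI : c ^ (1 - k) • u ∈ Λ i := hdec i hw
    have hNmem : (⟨c ^ (1 - k) • u, hwI⟩ : ↥(Λ i)) ∈ N := hw
    obtain ⟨d, hd⟩ := Ideal.mem_span_singleton'.mp (ht _ hNmem)
    have hφw : φ (c ^ (1 - k) • u) = algebraMap O (FractionRing O) d * c := by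
      rw [hφ ⟨_, hwI⟩, ← hd, map_mul]
    have hφu : φ u = c ^ k * algebraMap O (FractionRing O) d := by
      have h7 : u = c ^ (k - 1) • (c ^ (1 - k) • u) := by
        rw [smul_smul, ← zpow_add₀ hc0]
        norm_num
      rw [h7, φ.map_smul, smul_eq_mul, hφw]
      rw [show c ^ (k - 1) * (algebraMap O (FractionRing O) d * c)
          = (c ^ (k - 1) * c) * algebraMap O (FractionRing O) d by ring]
      rw [← zpow_add_one₀ hc0]
      norm_num
    have h8 : φ u • y = c ^ k • (d • y) := by
      rw [hφu, mul_smul, algebraMap_smul]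
    have h9 : d • y ∈ Λ (i - m) := (Λ (i - m)).smul_mem d hy
    have h10 := (hZ k (i - m) (d • y)).mp h9
    rw [h8]
    exact hmono _ _ hk1 h10
  -- conclusion
  apply le_antisymm
  · rw [Submodule.span_le]
    rintro y ⟨f, hf, x, hx, rfl⟩
    exact hf i x hx
  · intro y hy
    apply Submodule.subset_span
    refine ⟨φ.smulRight y, ?_, v t, (snf.bM t).2, ?_⟩
    · intro j x hx
      simpa using hmain y hy j x hx
    · simp [LinearMap.smulRight_apply, hφB t]
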